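/- arXiv:1805.02151 — 5 statements merged into one kernel-verified Lean document; each statement's English description precedes it below -/
import Mathlib

section
/- Let f, g : ℝ → ℝ with f(x) = 1 + 2x - √(1+4x). Then for all real x with 0 ≤ x ≤ 1/4, one has x² ≤ f(x) ≤ 3x². -/
theorem stmt_0 (f : ℝ → ℝ)
    (hf : ∀ x : ℝ, f x = 1 + 2 * x - Real.sqrt (1 + 4 * x)) :
    ∀ x : ℝ, 0 ≤ x → x ≤ 1 / 4 → x ^ 2 ≤ f x ∧ f x ≤ 3 * x ^ 2 := by
  intro x hx hx4
  rw [hf]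
  have h0 : (0:ℝ) ≤ 1 + 4 * x := by linarith
  set s := Real.sqrt (1 + 4 * x) with hsdef
  have hs : s ^ 2 = 1 + 4 * x := Real.sq_sqrt h0
  have hs0 : 0 ≤ s := Real.sqrt_nonneg _
  constructor
  · nlinarith [sq_nonneg (s - (1 + x)), sq_nonneg x, sq_nonneg (x*s), mul_nonneg hx hs0]
  · nlinarith [sq_nonneg (s - (1 + x)), sq_nonneg x, sq_nonneg (x*s), mul_nonneg hx hs0, sq_nonneg (s-1)]
end

section
/- Suppose X : [0,∞) → ℝ is differentiable, X(0) = A > 1/4, and X'(t) + 1 + 2X(t) - √(1+4X(t)) = 0 for all t ≥ 0, with X(t) > 0 for all t. If t_* ≥ 0 is such that X(t_*) = 1/4 and X(t) ≥ 1/4 for t ∈ [0, t_*], then A·exp(-6t) ≤ X(t) ≤ A·exp(-t/4) for all t ∈ [0, t_*]. -/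
lemma key_ineq (x : ℝ) (hx : 1 / 4 ≤ x) :
    x / 4 ≤ 1 + 2 * x - Real.sqrt (1 + 4 * x) ∧
      1 + 2 * x - Real.sqrt (1 + 4 * x) ≤ 6 * x := by
  have h0 : (0 : ℝ) ≤ 1 + 4 * x := by linarith
  have hs2 : Real.sqrt (1 + 4 * x) ^ 2 = 1 + 4 * x := Real.sq_sqrt h0
  have hsnn : 0 ≤ Real.sqrt (1 + 4 * x) := Real.sqrt_nonneg _
  have hs : 9 / 7 ≤ Real.sqrt (1 + 4 * x) := by nlinarith
  constructor <;> nlinarith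

theorem stmt_2 (X : ℝ → ℝ) (A tstar : ℝ)
    (hdiff : Differentiable ℝ X)
    (hX0 : X 0 = A) (hA : 1 / 4 < A)
    (hODE : ∀ t : ℝ, 0 ≤ t → deriv X t + 1 + 2 * X t - Real.sqrt (1 + 4 * X t) = 0)
    (hpos : ∀ t : ℝ, 0 ≤ t → 0 < X t)
    (htstar : 0 ≤ tstar) (hXtstar : X tstar = 1 / 4)
    (hge : ∀ t ∈ Set.Icc (0 : ℝ) tstar, 1 / 4 ≤ X t) :
    ∀ t ∈ Set.Icc (0 : ℝ) tstar,
      A * Real.exp (-6 * t) ≤ X t ∧ X t ≤ A * Real.exp (-t / 4) := by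
  have hX' : ∀ t : ℝ, HasDerivAt X (deriv X t) t := fun t => (hdiff t).hasDerivAt
  -- derivative of X bounds on [0, tstar]
  have hbound : ∀ s ∈ Set.Icc (0:ℝ) tstar,
      -6 * X s ≤ deriv X s ∧ deriv X s ≤ -(X s / 4) := by
    intro s hs
    have h14 : 1 / 4 ≤ X s := hge s hs
    have := key_ineq (X s) h14
    have hode := hODE s hs.1
    constructor <;> linarith [this.1, this.2]
  -- f is monotone, g is antitone
  have hf : ∀ t : ℝ, HasDerivAt (fun u => X u * Real.exp (6 * u))
      (deriv X t * Real.exp (6 * t) + X t * (Real.exp (6 * t) * 6)) t := by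
    intro t
    have he : HasDerivAt (fun u : ℝ => Real.exp (6 * u)) (Real.exp (6 * t) * 6) t := by
      simpa using ((hasDerivAt_id t).const_mul (6:ℝ)).exp
    exact (hX' t).mul he
  have hg : ∀ t : ℝ, HasDerivAt (fun u => X u * Real.exp (u / 4))
      (deriv X t * Real.exp (t / 4) + X t * (Real.exp (t / 4) * (1/4))) t := by
    intro t
    have he : HasDerivAt (fun u : ℝ => Real.exp (u / 4)) (Real.exp (t / 4) * (1/4)) t := by
      simpa using ((hasDerivAt_id t).div_const (4:ℝ)).exp
    exact (hX' t).mul he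
  have hfdiff : Differentiable ℝ (fun u => X u * Real.exp (6 * u)) :=
    fun t => ((hf t).differentiableAt)
  have hgdiff : Differentiable ℝ (fun u => X u * Real.exp (u / 4)) :=
    fun t => ((hg t).differentiableAt)
  have hmono : MonotoneOn (fun u => X u * Real.exp (6 * u)) (Set.Icc 0 tstar) := by
    apply monotoneOn_of_deriv_nonneg (convex_Icc 0 tstar) hfdiff.continuous.continuousOn
      (hfdiff.differentiableOn)
    intro x hx
    rw [interior_Icc] at hx
    have hx' : x ∈ Set.Icc (0:ℝ) tstar := ⟨le_of_lt hx.1, le_of_lt hx.2⟩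
    rw [(hf x).deriv]
    have hb := (hbound x hx').1
    have hep : 0 < Real.exp (6 * x) := Real.exp_pos _
    nlinarith
  have hanti : AntitoneOn (fun u => X u * Real.exp (u / 4)) (Set.Icc 0 tstar) := by
    apply antitoneOn_of_deriv_nonpos (convex_Icc 0 tstar) hgdiff.continuous.continuousOn
      (hgdiff.differentiableOn)
    intro x hx
    rw [interior_Icc] at hx
    have hx' : x ∈ Set.Icc (0:ℝ) tstar := ⟨le_of_lt hx.1, le_of_lt hx.2⟩
    rw [(hg x).deriv]
    have hb := (hbound x hx').2
    have hep : 0 < Real.exp (x / 4) := Real.exp_pos _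
    nlinarith
  intro t ht
  have h0mem : (0:ℝ) ∈ Set.Icc (0:ℝ) tstar := ⟨le_refl 0, htstar⟩
  have hm := hmono h0mem ht ht.1
  have ha := hanti h0mem ht ht.1
  simp only [mul_zero, Real.exp_zero, mul_one, zero_div] at hm ha
  rw [hX0] at hm ha
  constructor
  · have e1 : Real.exp (-6 * t) * Real.exp (6 * t) = 1 := by
      rw [← Real.exp_add]; ring_nf; exact Real.exp_zero
    have hep : 0 < Real.exp (-6 * t) := Real.exp_pos _
    have h1 := mul_le_mul_of_nonneg_left hm hep.le
    have h2 : Real.exp (-6 * t) * (X t * Real.exp (6 * t)) = X t := by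
      rw [mul_comm (X t), ← mul_assoc, e1, one_mul]
    nlinarith
  · have e1 : Real.exp (-t / 4) * Real.exp (t / 4) = 1 := by
      rw [← Real.exp_add]; ring_nf; exact Real.exp_zero
    have hep : 0 < Real.exp (-t / 4) := Real.exp_pos _
    have h1 := mul_le_mul_of_nonneg_left ha hep.le
    have h2 : Real.exp (-t / 4) * (X t * Real.exp (t / 4)) = X t := by
      rw [mul_comm (X t), ← mul_assoc, e1, one_mul]
    nlinarith
end

section
/- Suppose X : [t_*,∞) → ℝ is differentiable and satisfies X'(t) + 1 + 2X(t) - √(1+4X(t)) = 0 for all t ≥ t_*, X(t_*) = 1/4, and 0 < X(t) ≤ 1/4 for all t ≥ t_*. Then for all t ≥ t_*, 1/(4 + 3(t - t_*)) ≤ X(t) ≤ 1/(4 + (t - t_*)). -/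
lemma key_ineq_stmt3 (x : ℝ) (hx : 0 < x) (hx4 : x ≤ 1/4) :
    x^2 ≤ 1 + 2*x - Real.sqrt (1+4*x) ∧ 1 + 2*x - Real.sqrt (1+4*x) ≤ 3*x^2 := by
  set s := Real.sqrt (1+4*x) with hs
  have h0 : (0:ℝ) ≤ 1 + 4*x := by linarith
  have hsq : s^2 = 1 + 4*x := Real.sq_sqrt h0
  have hs1 : 1 ≤ s := by nlinarith [Real.sqrt_nonneg (1+4*x)]
  have hs2 : s^2 ≤ 2 := by nlinarith
  have hsle : s ≤ 2 := by nlinarith [Real.sqrt_nonneg (1+4*x)]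
  constructor
  · nlinarith [sq_nonneg (s-1), sq_nonneg (s+1)]
  · nlinarith [sq_nonneg (s-1), sq_nonneg (s+1)]

theorem stmt_3 (X : ℝ → ℝ) (tstar : ℝ)
    (hdiff : Differentiable ℝ X)
    (hODE : ∀ t : ℝ, tstar ≤ t → deriv X t + 1 + 2 * X t - Real.sqrt (1 + 4 * X t) = 0)
    (hXtstar : X tstar = 1 / 4)
    (hbound : ∀ t : ℝ, tstar ≤ t → 0 < X t ∧ X t ≤ 1 / 4) :
    ∀ t : ℝ, tstar ≤ t →
      1 / (4 + 3 * (t - tstar)) ≤ X t ∧ X t ≤ 1 / (4 + (t - tstar)) := by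
  -- g t = (X t)⁻¹ has derivative (1 + 2 X t - √(1+4 X t)) / (X t)^2 on [tstar, ∞)
  have hgderiv : ∀ t : ℝ, tstar ≤ t →
      HasDerivAt (fun s => (X s)⁻¹)
        ((1 + 2 * X t - Real.sqrt (1 + 4 * X t)) / (X t)^2) t := by
    intro t ht
    have hx := (hbound t ht).1
    have h1 : HasDerivAt (fun s => (X s)⁻¹) (-(deriv X t) / (X t)^2) t :=
      (hdiff t).hasDerivAt.inv (ne_of_gt hx)
    have h2 : -(deriv X t) = 1 + 2 * X t - Real.sqrt (1 + 4 * X t) := by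
      have := hODE t ht; linarith
    rwa [h2] at h1
  -- the derivative is between 1 and 3
  have hder_bounds : ∀ t : ℝ, tstar ≤ t →
      1 ≤ (1 + 2 * X t - Real.sqrt (1 + 4 * X t)) / (X t)^2 ∧
      (1 + 2 * X t - Real.sqrt (1 + 4 * X t)) / (X t)^2 ≤ 3 := by
    intro t ht
    obtain ⟨hx, hx4⟩ := hbound t ht
    obtain ⟨h1, h2⟩ := key_ineq_stmt3 (X t) hx hx4
    have hx2 : (0:ℝ) < (X t)^2 := by positivity
    constructor
    · rw [le_div_iff₀ hx2]; linarith
    · rw [div_le_iff₀ hx2]; linarith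
  have hXcont : ContinuousOn (fun s => (X s)⁻¹) (Set.Ici tstar) :=
    (hdiff.continuous.continuousOn).inv₀ (fun t ht => ne_of_gt (hbound t ht).1)
  have hint : interior (Set.Ici tstar) = Set.Ioi tstar := interior_Ici
  -- monotonicity of h₁ t = (X t)⁻¹ - t
  have hmono1 : MonotoneOn (fun t => (X t)⁻¹ - t) (Set.Ici tstar) := by
    apply monotoneOn_of_deriv_nonneg (convex_Ici tstar)
      (hXcont.sub continuousOn_id)
    · intro t ht
      rw [hint] at ht
      exact (((hgderiv t (le_of_lt ht)).sub (hasDerivAt_id t)).differentiableAt).differentiableWithinAt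
    · intro t ht
      rw [hint] at ht
      have hd := ((hgderiv t (le_of_lt ht)).sub (hasDerivAt_id t)).deriv
      rw [hd]
      have := (hder_bounds t (le_of_lt ht)).1
      linarith
  -- monotonicity of h₂ t = 3t - (X t)⁻¹
  have hmono2 : MonotoneOn (fun t => 3 * t - (X t)⁻¹) (Set.Ici tstar) := by
    apply monotoneOn_of_deriv_nonneg (convex_Ici tstar)
      ((continuousOn_const.mul continuousOn_id).sub hXcont)
    · intro t ht
      rw [hint] at ht
      exact ((((hasDerivAt_id t).const_mul (3:ℝ)).sub (hgderiv t (le_of_lt ht))).differentiableAt).differentiableWithinAt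
    · intro t ht
      rw [hint] at ht
      have hd := (((hasDerivAt_id t).const_mul (3:ℝ)).sub (hgderiv t (le_of_lt ht))).deriv
      rw [show ((fun x => (3:ℝ)) * id - fun s => (X s)⁻¹) = ((fun y => 3 * id y) - fun s => (X s)⁻¹) from rfl, hd]
      have := (hder_bounds t (le_of_lt ht)).2
      linarith
  intro t ht
  have hx := (hbound t ht).1
  have hinv_star : (X tstar)⁻¹ = 4 := by rw [hXtstar]; norm_num
  have h1 := hmono1 (Set.self_mem_Ici) ht ht
  have h2 := hmono2 (Set.self_mem_Ici) ht ht
  simp only [hinv_star] at h1 h2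
  -- h1 : 4 - tstar ≤ (X t)⁻¹ - t ; h2 : 3*tstar - 4 ≤ 3*t - (X t)⁻¹
  have hlow : 4 + (t - tstar) ≤ (X t)⁻¹ := by linarith
  have hhigh : (X t)⁻¹ ≤ 4 + 3 * (t - tstar) := by linarith
  have hpos1 : (0:ℝ) < 4 + (t - tstar) := by linarith
  have hpos3 : (0:ℝ) < 4 + 3 * (t - tstar) := by linarith
  constructor
  · rw [div_le_iff₀ hpos3]
    calc (1:ℝ) = X t * (X t)⁻¹ := (mul_inv_cancel₀ (ne_of_gt hx)).symm
    _ ≤ X t * (4 + 3 * (t - tstar)) := by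
        exact mul_le_mul_of_nonneg_left hhigh (le_of_lt hx)
  · rw [le_div_iff₀ hpos1]
    calc X t * (4 + (t - tstar)) ≤ X t * (X t)⁻¹ :=
        mul_le_mul_of_nonneg_left hlow (le_of_lt hx)
    _ = 1 := mul_inv_cancel₀ (ne_of_gt hx)
end

section
/- Let v, v_*, v' ∈ ℝ³ with v' = (v+v_*)/2 + (|v-v_*|/2)σ for some σ ∈ 𝕊², and suppose cos θ = ((v-v_*)/|v-v_*|)·σ ≥ 0 (i.e. θ ∈ [0, π/2]). If |v - v_*| ≥ 10|v|, then |v'_*| ≥ (1/5)|v - v_*|, where v'_* = (v+v_*)/2 - (|v-v_*|/2)σ. -/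
open scoped RealInnerProductSpace

theorem stmt_11 (v vs σ : EuclideanSpace ℝ (Fin 3)) (hσ : ‖σ‖ = 1) (hne : v ≠ vs)
    (hcos : 0 ≤ ⟪‖v - vs‖⁻¹ • (v - vs), σ⟫)
    (hfar : 10 * ‖v‖ ≤ ‖v - vs‖) :
    (1 / 5 : ℝ) * ‖v - vs‖ ≤ ‖(1 / 2 : ℝ) • (v + vs) - (‖v - vs‖ / 2) • σ‖ := by
  set r := ‖v - vs‖ with hr
  have hrpos : 0 < r := by
    simpa [hr] using norm_sub_pos_iff.mpr hne
  have hinner : 0 ≤ ⟪v - vs, σ⟫ := by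
    rw [real_inner_smul_left] at hcos
    nlinarith [inv_pos.mpr hrpos]
  set u := (1 / 2 : ℝ) • (v + vs) - (r / 2) • σ with hu
  have huv : u - v = (1 / 2 : ℝ) • (vs - v) - (r / 2) • σ := by
    rw [hu]
    module
  have hsq : r ^ 2 / 2 ≤ ‖u - v‖ ^ 2 := by
    have h1 : ‖vs - v‖ = r := by rw [hr, norm_sub_rev]
    have h4 : ⟪vs - v, σ⟫ = -⟪v - vs, σ⟫ := by
      rw [show vs - v = -(v - vs) by abel, inner_neg_left]
    have hexp : ‖u - v‖ ^ 2 = r ^ 2 / 2 + (r / 2) * ⟪v - vs, σ⟫ := by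
      rw [huv, @norm_sub_sq_real, norm_smul, norm_smul, real_inner_smul_left,
        real_inner_smul_right, h1, hσ, h4]
      simp [abs_of_nonneg, hrpos.le]
      ring
    nlinarith
  have hge : 3 / 10 * r ≤ ‖u - v‖ := by
    nlinarith [norm_nonneg (u - v), hrpos.le]
  have htri : ‖u - v‖ ≤ ‖u‖ + ‖v‖ := by
    simpa using norm_sub_le u v
  linarith
end

section
/- For all u ∈ ℝ³ \ {0} and σ ∈ 𝕊² with (u/|u|)·σ ≥ 0, let u⁺ = (u + |u|σ)/2 and let w = |u|·u⁺/|u⁺| (note u⁺ ≠ 0). Then |w| = |u|, and for any l ∈ ℝ the Japanese bracket weights satisfy ⟨w⟩^l = ⟨u⟩^l. Moreover |u⁺| = |u| cos(θ/2) where cos θ = (u/|u|)·σ, and |⟨w⟩^{l}⟨u⁺⟩^{-l} - 1| ≤ C(l)·θ² uniformly for θ ∈ [0, π/2] and u with |u| ≥ 1. -/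
lemma aux_exp_17 (x : ℝ) : |Real.exp x - 1| ≤ |x| * Real.exp |x| := by
  rcases le_or_gt 0 x with h | h
  · rw [abs_of_nonneg h, abs_of_nonneg (by nlinarith [Real.add_one_le_exp x] : (0:ℝ) ≤ Real.exp x - 1)]
    have h4 : Real.exp (-x) * Real.exp x = 1 := by rw [← Real.exp_add]; simp
    nlinarith [mul_le_mul_of_nonneg_right (Real.add_one_le_exp (-x)) (Real.exp_pos x).le, h4]
  · have h1 : Real.exp x < 1 := Real.exp_lt_one_iff.mpr h
    rw [abs_of_neg h, abs_of_nonpos (by linarith : Real.exp x - 1 ≤ 0)]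
    have h2 : (1:ℝ) ≤ Real.exp (-x) := Real.one_le_exp (by linarith)
    nlinarith [Real.add_one_le_exp x, mul_nonneg (by linarith : (0:ℝ) ≤ -x) (by linarith : (0:ℝ) ≤ Real.exp (-x) - 1)]

lemma aux_rpow_17 (s : ℝ) (r : ℝ) (h1 : 1 ≤ r) (h2 : r ≤ 2) :
    |r ^ s - 1| ≤ (|s| * Real.exp (|s| * Real.log 2)) * (r - 1) := by
  have hr : (0:ℝ) < r := lt_of_lt_of_le one_pos h1
  have hlog0 : 0 ≤ Real.log r := Real.log_nonneg h1
  have hlog2 : Real.log r ≤ Real.log 2 := Real.log_le_log hr h2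
  have hlog3 : Real.log r ≤ r - 1 := by
    have := Real.log_le_sub_one_of_pos hr; linarith
  rw [Real.rpow_def_of_pos hr]
  have h3 := aux_exp_17 (Real.log r * s)
  have habs : |Real.log r * s| = Real.log r * |s| := by
    rw [abs_mul, abs_of_nonneg hlog0]
  have hexp : Real.exp (Real.log r * |s|) ≤ Real.exp (|s| * Real.log 2) := by
    apply Real.exp_le_exp.mpr
    nlinarith [abs_nonneg s]
  rw [habs] at h3
  calc |Real.exp (Real.log r * s) - 1| ≤ (Real.log r * |s|) * Real.exp (Real.log r * |s|) := h3
    _ ≤ (Real.log r * |s|) * Real.exp (|s| * Real.log 2) :=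
        mul_le_mul_of_nonneg_left hexp (by positivity)
    _ ≤ (|s| * Real.exp (|s| * Real.log 2)) * (r - 1) := by
        nlinarith [mul_nonneg (mul_nonneg (abs_nonneg s) (Real.exp_pos (|s| * Real.log 2)).le)
          (by linarith : (0:ℝ) ≤ r - 1 - Real.log r)]

lemma aux_est_17 (l t θ n : ℝ) (ht0 : 0 ≤ t) (ht1 : t ≤ 1)
    (h1mt : 1 - t ≤ θ ^ 2 / 2) (_hn : 0 ≤ n) :
    |(1 + n ^ 2) ^ (l / 2) * (1 + n ^ 2 * ((1 + t) / 2)) ^ (-l / 2) - 1|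
      ≤ (|l / 2| * Real.exp (|l / 2| * Real.log 2) + 1) * θ ^ 2 := by
  set a : ℝ := 1 + n ^ 2 with hadef
  set b : ℝ := 1 + n ^ 2 * ((1 + t) / 2) with hbdef
  have hb : (0 : ℝ) < b := by
    rw [hbdef]
    nlinarith [mul_nonneg (sq_nonneg n) (by linarith : (0:ℝ) ≤ (1 + t) / 2)]
  have ha : (0 : ℝ) < a := by positivity
  have hab : a ^ (l / 2) * b ^ (-l / 2) = (a / b) ^ (l / 2) := by
    rw [neg_div, Real.rpow_neg hb.le, Real.div_rpow ha.le hb.le]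
    exact (div_eq_mul_inv _ _).symm
  have hr1 : 1 ≤ a / b := by
    rw [le_div_iff₀ hb, hbdef, hadef]
    nlinarith [mul_nonneg (sq_nonneg n) (by linarith : (0:ℝ) ≤ 1 - t)]
  have hr2 : a / b ≤ 2 := by
    rw [div_le_iff₀ hb, hbdef, hadef]
    nlinarith [mul_nonneg (sq_nonneg n) ht0]
  have hr3 : a / b - 1 ≤ θ ^ 2 := by
    rw [div_sub_one hb.ne', div_le_iff₀ hb, hbdef, hadef]
    nlinarith [mul_le_mul_of_nonneg_left h1mt (sq_nonneg n),
      mul_nonneg (mul_nonneg (sq_nonneg θ) (sq_nonneg n)) ht0, sq_nonneg θ]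
  have hmain := aux_rpow_17 (l / 2) (a / b) hr1 hr2
  rw [hab]
  calc |(a / b) ^ (l / 2) - 1|
      ≤ (|l / 2| * Real.exp (|l / 2| * Real.log 2)) * (a / b - 1) := hmain
    _ ≤ (|l / 2| * Real.exp (|l / 2| * Real.log 2) + 1) * θ ^ 2 := by
        nlinarith [mul_nonneg (abs_nonneg (l / 2)) (Real.exp_pos (|l / 2| * Real.log 2)).le,
          sq_nonneg θ, Real.exp_pos (|l / 2| * Real.log 2)]
open scoped RealInnerProductSpace

theorem stmt_17 (l : ℝ) :
    ∃ C : ℝ, 0 < C ∧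
      ∀ u σ : EuclideanSpace ℝ (Fin 3), u ≠ 0 → ‖σ‖ = 1 →
        0 ≤ ⟪‖u‖⁻¹ • u, σ⟫ →
        (1 / 2 : ℝ) • (u + ‖u‖ • σ) ≠ 0 ∧
        ‖(‖u‖ / ‖(1 / 2 : ℝ) • (u + ‖u‖ • σ)‖) • ((1 / 2 : ℝ) • (u + ‖u‖ • σ))‖ = ‖u‖ ∧
        (1 + ‖(‖u‖ / ‖(1 / 2 : ℝ) • (u + ‖u‖ • σ)‖) • ((1 / 2 : ℝ) • (u + ‖u‖ • σ))‖ ^ 2)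
              ^ (l / 2)
          = (1 + ‖u‖ ^ 2) ^ (l / 2) ∧
        ‖(1 / 2 : ℝ) • (u + ‖u‖ • σ)‖
          = ‖u‖ * Real.cos (Real.arccos ⟪‖u‖⁻¹ • u, σ⟫ / 2) ∧
        (1 ≤ ‖u‖ →
          |(1 + ‖u‖ ^ 2) ^ (l / 2)
              * (1 + ‖(1 / 2 : ℝ) • (u + ‖u‖ • σ)‖ ^ 2) ^ (-l / 2) - 1|
            ≤ C * (Real.arccos ⟪‖u‖⁻¹ • u, σ⟫) ^ 2) := by
  refine ⟨|l / 2| * Real.exp (|l / 2| * Real.log 2) + 1, by positivity, ?_⟩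
  intro u σ hu hσ ht0
  set t : ℝ := ⟪‖u‖⁻¹ • u, σ⟫ with htdef
  have hun : (0:ℝ) < ‖u‖ := norm_pos_iff.mpr hu
  have ht1 : t ≤ 1 := by
    have h := real_inner_le_norm (‖u‖⁻¹ • u) σ
    rwa [norm_smul, Real.norm_eq_abs, abs_of_nonneg (inv_nonneg.mpr hun.le),
      inv_mul_cancel₀ hun.ne', hσ, one_mul] at h
  set θ : ℝ := Real.arccos t with hθdef
  have hcosθ : Real.cos θ = t := Real.cos_arccos (by linarith) ht1
  have hθ0 : 0 ≤ θ := Real.arccos_nonneg t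
  have hθpi : θ ≤ Real.pi := Real.arccos_le_pi t
  set c : ℝ := Real.cos (θ / 2) with hcdef
  have hc2 : c ^ 2 = (1 + t) / 2 := by
    rw [hcdef, Real.cos_sq, show 2 * (θ / 2) = θ by ring, hcosθ]; ring
  have hc0' : 0 ≤ c := Real.cos_nonneg_of_mem_Icc
    ⟨by linarith [Real.pi_pos], by linarith⟩
  have hc0 : 0 < c := by nlinarith
  have hinner : ⟪u, σ⟫ = ‖u‖ * t := by
    rw [htdef, real_inner_smul_left]; field_simp
  have hplus : ‖(1 / 2 : ℝ) • (u + ‖u‖ • σ)‖ ^ 2 = ‖u‖ ^ 2 * ((1 + t) / 2) := by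
    rw [norm_smul, mul_pow, Real.norm_eq_abs]
    rw [norm_add_sq_real, real_inner_smul_right, hinner, norm_smul, Real.norm_eq_abs,
      abs_of_nonneg hun.le, hσ]
    rw [show |(1/2 : ℝ)| = 1/2 by norm_num]
    ring
  have key : ‖(1 / 2 : ℝ) • (u + ‖u‖ • σ)‖ = ‖u‖ * c := by
    have h1 : (0:ℝ) ≤ ‖u‖ * c := mul_nonneg hun.le hc0.le
    calc ‖(1 / 2 : ℝ) • (u + ‖u‖ • σ)‖
        = Real.sqrt (‖(1 / 2 : ℝ) • (u + ‖u‖ • σ)‖ ^ 2) := (Real.sqrt_sq (norm_nonneg _)).symm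
      _ = Real.sqrt ((‖u‖ * c) ^ 2) := by rw [hplus, mul_pow, hc2]
      _ = ‖u‖ * c := Real.sqrt_sq h1
  have hpluspos : 0 < ‖(1 / 2 : ℝ) • (u + ‖u‖ • σ)‖ := by
    rw [key]; positivity
  have hne : (1 / 2 : ℝ) • (u + ‖u‖ • σ) ≠ 0 := by
    intro h; rw [h, norm_zero] at hpluspos; exact lt_irrefl 0 hpluspos
  have hwnorm : ‖(‖u‖ / ‖(1 / 2 : ℝ) • (u + ‖u‖ • σ)‖) • ((1 / 2 : ℝ) • (u + ‖u‖ • σ))‖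
      = ‖u‖ := by
    rw [norm_smul, Real.norm_eq_abs, abs_of_nonneg (div_nonneg hun.le hpluspos.le),
      div_mul_cancel₀ _ hpluspos.ne']
  refine ⟨hne, hwnorm, by rw [hwnorm], key, ?_⟩
  intro _
  -- reduce to a pure real-number estimate
  have hsin : Real.sin (θ / 2) ≤ θ / 2 := Real.sin_le (by linarith)
  have hsin0 : 0 ≤ Real.sin (θ / 2) :=
    Real.sin_nonneg_of_nonneg_of_le_pi (by linarith) (by linarith)
  have hsin2 : Real.sin (θ / 2) ^ 2 = (1 - t) / 2 := by
    rw [Real.sin_sq, ← hcdef, hc2]; ring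
  have h1mt : 1 - t ≤ θ ^ 2 / 2 := by nlinarith
  rw [hplus]
  exact aux_est_17 l t θ ‖u‖ ht0 ht1 h1mt (norm_nonneg u)
end
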